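/- Every pointwise periodic homeomorphism of a compact, totally disconnected (zero-dimensional) metric space is equicontinuous. -/
import Mathlib


open TopologicalSpace Metric Set Filter
open Topology

/-- The induced map on the hyperspace of nonempty compact (= closed) subsets. -/
noncomputable def hyper {X : Type*} [MetricSpace X] (f : X ≃ₜ X) :
    NonemptyCompacts X → NonemptyCompacts X :=
  fun A => ⟨⟨f '' A, A.isCompact.image f.continuous⟩, A.nonempty.image f⟩

/-- `x` is uniformly recurrent for `g`. -/
def IsUnifRec {α : Type*} [MetricSpace α] (g : α → α) (x : α) : Prop :=
  ∀ ε > (0:ℝ), ∃ N > 0, ∀ k : ℕ, dist (g^[k * N] x) x < ε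

/-- `x` is recurrent for `g` (it belongs to its own ω-limit set). -/
def IsRec {α : Type*} [MetricSpace α] (g : α → α) (x : α) : Prop :=
  ∀ ε > (0:ℝ), ∀ m : ℕ, ∃ n ≥ m, 0 < n ∧ dist (g^[n] x) x < ε

/-- `x` is almost periodic for `g`. -/
def IsAP {α : Type*} [MetricSpace α] (g : α → α) (x : α) : Prop :=
  ∀ ε > (0:ℝ), ∃ N : ℕ, ∀ n : ℕ, ∃ i < N, dist (g^[n + i] x) x < ε

/-- `(x, y)` is an asymptotic pair for `g`. -/
def Asymp {α : Type*} [MetricSpace α] (g : α → α) (x y : α) : Prop :=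
  Filter.Tendsto (fun n => dist (g^[n] x) (g^[n] y)) Filter.atTop (nhds 0)

/-- `(x, y)` is a proximal pair for `g`. -/
def Proximal {α : Type*} [MetricSpace α] (g : α → α) (x y : α) : Prop :=
  ∀ ε > (0:ℝ), ∀ m : ℕ, ∃ n ≥ m, dist (g^[n] x) (g^[n] y) < ε

/-- The ω-limit set of `x` under `g`. -/
def omegaSet {α : Type*} [MetricSpace α] (g : α → α) (x : α) : Set α :=
  {y | ∀ ε > (0:ℝ), ∀ m : ℕ, ∃ n ≥ m, dist (g^[n] x) y < ε}

/-- `M` is a minimal set of `g`. -/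
def IsMinimalFor {α : Type*} [TopologicalSpace α] (g : α → α) (M : Set α) : Prop :=
  M.Nonempty ∧ IsClosed M ∧ Set.MapsTo g M M ∧
    ∀ M' ⊆ M, M'.Nonempty → IsClosed M' → Set.MapsTo g M' M' → M' = M

/-- `A` is internally chain transitive for `g`. -/
def ICT {α : Type*} [MetricSpace α] (g : α → α) (A : Set α) : Prop :=
  ∀ a ∈ A, ∀ b ∈ A, ∀ ε > (0:ℝ), ∃ N : ℕ, 1 ≤ N ∧ ∃ c : ℕ → α,
    c 0 = a ∧ c N = b ∧ (∀ i ≤ N, c i ∈ A) ∧ ∀ i < N, dist (g (c i)) (c (i + 1)) < ε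

/-- Key lemma: if `g` is a pointwise periodic continuous map with continuous left inverse `h`
on a compact metric space, then for any clopen `V` the set of points whose entire forward
orbit stays in `V` is open. -/
lemma openW_aux {X : Type*} [MetricSpace X] [CompactSpace X]
    {g h : X → X} (hg : Continuous g) (hh : Continuous h)
    (hinv : Function.LeftInverse h g)
    (hper : ∀ x : X, ∃ n > 0, g^[n] x = x)
    {V : Set X} (hV : IsClopen V) :
    IsOpen {x | ∀ m : ℕ, g^[m] x ∈ V} := by
  classical
  set W := {x | ∀ m : ℕ, g^[m] x ∈ V} with hWdef
  rw [isOpen_iff_mem_nhds]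
  intro z hz
  by_contra hnz
  -- a sequence of points outside `W` converging to `z`
  have hx : ∀ k : ℕ, ∃ x : X, dist x z < 1/(k+1) ∧ x ∉ W := by
    intro k
    have hk : (0:ℝ) < 1/(k+1) := by positivity
    by_contra hcon
    push_neg at hcon
    exact hnz (Metric.mem_nhds_iff.2 ⟨1/(k+1), hk, fun u hu => hcon u (mem_ball.1 hu)⟩)
  choose x hxd hxW using hx
  have hxz : Tendsto x atTop (𝓝 z) := by
    rw [tendsto_iff_dist_tendsto_zero]
    apply squeeze_zero (fun k => dist_nonneg) (fun k => (hxd k).le)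
    exact tendsto_one_div_add_atTop_nhds_zero_nat
  -- first exit times
  have hex : ∀ k, ∃ m : ℕ, g^[m] (x k) ∉ V := by
    intro k; by_contra hc; push_neg at hc; exact hxW k hc
  set m : ℕ → ℕ := fun k => Nat.find (hex k) with hm
  have hmspec : ∀ k, g^[m k] (x k) ∉ V := fun k => Nat.find_spec (hex k)
  have hmmin : ∀ k, ∀ i < m k, g^[i] (x k) ∈ V := by
    intro k i hi; by_contra hc; exact Nat.find_min (hex k) hi hc
  -- the exit times tend to infinity
  have hmtop : Tendsto m atTop atTop := by
    rw [Filter.tendsto_atTop]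
    intro N
    have hev : ∀ᶠ k in atTop, ∀ i < N, g^[i] (x k) ∈ V := by
      induction N with
      | zero => simp
      | succ N ih =>
        have h1 : ∀ᶠ k in atTop, g^[N] (x k) ∈ V := by
          have ht : Tendsto (fun k => g^[N] (x k)) atTop (𝓝 (g^[N] z)) :=
            ((hg.iterate N).tendsto z).comp hxz
          exact ht (hV.2.mem_nhds (hz N))
        filter_upwards [ih, h1] with k h2 h3 i hi
        rcases Nat.lt_succ_iff_lt_or_eq.1 hi with hlt | heq
        · exact h2 i hlt
        · rw [heq]; exact h3
    filter_upwards [hev] with k hk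
    by_contra hc
    push_neg at hc
    exact hmspec k (hk (m k) hc)
  -- the exit points
  set w : ℕ → X := fun k => g^[m k - 1] (x k) with hwdef
  obtain ⟨w0, -, φ, hφ, hwlim⟩ := isCompact_univ.tendsto_subseq (x := w) (fun k => mem_univ _)
  have hφtop : Tendsto (fun k => m (φ k)) atTop atTop := hmtop.comp hφ.tendsto_atTop
  -- the limit exit point leaves `V` in one step
  have hgw0 : g w0 ∉ V := by
    have hev : ∀ᶠ k in atTop, g (w (φ k)) ∈ Vᶜ := by
      filter_upwards [hφtop.eventually_ge_atTop 1] with k hk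
      have h1 : g (w (φ k)) = g^[(m (φ k) - 1) + 1] (x (φ k)) :=
        (Function.iterate_succ_apply' g _ _).symm
      rw [Nat.sub_add_cancel hk] at h1
      rw [mem_compl_iff, h1]
      exact hmspec (φ k)
    exact (hV.2.isClosed_compl).mem_of_tendsto ((hg.tendsto w0).comp hwlim) hev
  -- all backward iterates of the limit exit point stay in `V`
  have hbw : ∀ i : ℕ, h^[i] w0 ∈ V := by
    intro i
    have hev : ∀ᶠ k in atTop, h^[i] (w (φ k)) ∈ V := by
      filter_upwards [hφtop.eventually_ge_atTop (i + 1)] with k hk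
      have h1 : h^[i] (w (φ k)) = g^[m (φ k) - 1 - i] (x (φ k)) := by
        show h^[i] (g^[m (φ k) - 1] (x (φ k))) = _
        conv_lhs => rw [show (m (φ k) - 1 : ℕ) = i + (m (φ k) - 1 - i) from by omega,
          Function.iterate_add_apply]
        exact hinv.iterate i _
      rw [h1]
      exact hmmin (φ k) _ (by omega)
    exact hV.1.mem_of_tendsto (((hh.iterate i).tendsto w0).comp hwlim) hev
  -- but the limit exit point is periodic, a contradiction
  obtain ⟨P, hP, hgP⟩ := hper w0
  have e1 : g^[P] w0 = g^[P-1] (g w0) := by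
    conv_lhs => rw [show P = (P-1)+1 from by omega]
    rw [Function.iterate_add_apply, Function.iterate_one]
  have e2 : g w0 = h^[P-1] w0 := by
    calc g w0 = h^[P-1] (g^[P-1] (g w0)) := (hinv.iterate (P-1) _).symm
    _ = h^[P-1] (g^[P] w0) := by rw [e1]
    _ = h^[P-1] w0 := by rw [hgP]
  rw [e2] at hgw0
  exact hgw0 (hbw (P - 1))

theorem stmt7 {X : Type*} [MetricSpace X] [CompactSpace X] [TotallyDisconnectedSpace X]
    (f : X ≃ₜ X) (hper : ∀ x : X, ∃ n > 0, (⇑f)^[n] x = x) :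
    ∀ ε > (0:ℝ), ∃ δ > (0:ℝ), ∀ x y : X, dist x y < δ →
      ∀ n : ℕ, dist ((⇑f)^[n] x) ((⇑f)^[n] y) < ε := by
  intro ε hε
  -- around each point there is an open set whose points stay ε-close under all iterates
  have key : ∀ z : X, ∃ W : Set X, IsOpen W ∧ z ∈ W ∧
      ∀ x ∈ W, ∀ y ∈ W, ∀ n : ℕ, dist ((⇑f)^[n] x) ((⇑f)^[n] y) < ε := by
    intro z
    obtain ⟨p, hp, hfp⟩ := hper z
    -- small clopen neighborhoods of the orbit points
    have hC : ∀ i : ℕ, ∃ C : Set X, IsClopen C ∧ (⇑f)^[i] z ∈ C ∧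
        C ⊆ ball ((⇑f)^[i] z) (ε/2) := fun i =>
      compact_exists_isClopen_in_isOpen isOpen_ball (mem_ball_self (by linarith))
    choose C hCclopen hCmem hCsub using hC
    set V : Set X := ⋂ i ∈ Finset.range p, (⇑f)^[i] ⁻¹' C i with hVdef
    have hVclopen : IsClopen V := by
      apply Set.Finite.isClopen_biInter (Finset.range p).finite_toSet
      intro i _
      exact (hCclopen i).preimage (f.continuous.iterate i)
    have hVmem : ∀ u : X, u ∈ V ↔ ∀ i < p, (⇑f)^[i] u ∈ C i := by
      intro u
      simp only [hVdef, Set.mem_iInter, Set.mem_preimage, Finset.mem_range]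
    -- apply the key lemma to g = f^[p]
    have hinv : Function.LeftInverse ((⇑f.symm)^[p]) ((⇑f)^[p]) :=
      Function.LeftInverse.iterate (fun u => f.symm_apply_apply u) p
    have hgper : ∀ u : X, ∃ n > 0, ((⇑f)^[p])^[n] u = u := by
      intro u
      obtain ⟨n, hn, hfn⟩ := hper u
      refine ⟨n, hn, ?_⟩
      rw [← Function.iterate_mul, mul_comm, Function.iterate_mul]
      exact Function.iterate_fixed hfn p
    have hWopen : IsOpen {u | ∀ m : ℕ, ((⇑f)^[p])^[m] u ∈ V} :=
      openW_aux (f.continuous.iterate p) (f.symm.continuous.iterate p) hinv hgper hVclopen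
    refine ⟨_, hWopen, ?_, ?_⟩
    · intro m
      rw [Function.iterate_fixed hfp m, hVmem]
      exact fun i _ => hCmem i
    · -- any point of W has its n-th iterate ε/2-close to f^[n % p] z
      have hmem : ∀ u : X, (∀ m : ℕ, ((⇑f)^[p])^[m] u ∈ V) →
          ∀ n : ℕ, (⇑f)^[n] u ∈ ball ((⇑f)^[n % p] z) (ε/2) := by
        intro u hu n
        have h1 : (⇑f)^[n] u = (⇑f)^[n % p] (((⇑f)^[p])^[n / p] u) := by
          rw [← Function.iterate_mul, ← Function.iterate_add_apply, Nat.mod_add_div]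
        rw [h1]
        exact hCsub (n % p) ((hVmem _).1 (hu (n / p)) (n % p) (Nat.mod_lt _ hp))
      intro a ha b hb n
      have h1 := mem_ball.1 (hmem a ha n)
      have h2 := mem_ball.1 (hmem b hb n)
      calc dist ((⇑f)^[n] a) ((⇑f)^[n] b)
          ≤ dist ((⇑f)^[n] a) ((⇑f)^[n % p] z) + dist ((⇑f)^[n] b) ((⇑f)^[n % p] z) :=
            dist_triangle_right _ _ _
        _ < ε := by linarith
  choose W hWo hWz hWp using key
  obtain ⟨δ, hδ, hle⟩ := lebesgue_number_lemma_of_metric isCompact_univ hWo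
    (fun u _ => mem_iUnion.2 ⟨u, hWz u⟩)
  refine ⟨δ, hδ, fun x y hxy n => ?_⟩
  obtain ⟨z, hz⟩ := hle x (mem_univ x)
  exact hWp z x (hz (mem_ball_self hδ)) y (hz (by rwa [mem_ball, dist_comm])) n
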